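/- (Lemma 1 of the paper, existence, uniqueness and identification of the minimum spanning set.) For any μ ∈ ℝ^d: a subset S ⊆ {1,…,d} spans the mean-variance frontier if and only if S ⊇ S*. Consequently S* is nonempty, S* spans the mean-variance frontier, and S* is the unique spanning set that is minimal with respect to inclusion (no proper subset of S* spans, and every spanning set contains S*); i.e., the minimum spanning set MSS exists, is unique, and equals S*. -/

import Mathlib

open Matrix

/-- `v_S(p)`: the infimum of portfolio variance over fully invested portfolios
supported on `S` with target mean `p`, valued in `EReal` (so `inf ∅ = +∞`). -/
noncomputable def vS {d : ℕ} (A : Matrix (Fin d) (Fin d) ℝ) (μ : Fin d → ℝ)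
    (S : Set (Fin d)) (p : ℝ) : EReal :=
  sInf {q : EReal | ∃ x : Fin d → ℝ,
    ((fun _ => (1 : ℝ)) ⬝ᵥ x = 1) ∧ (μ ⬝ᵥ x = p) ∧
    (∀ i, i ∉ S → x i = 0) ∧ q = ((x ⬝ᵥ (A *ᵥ x) : ℝ) : EReal)}

/-- `S` spans the mean-variance frontier of the full asset set. -/
def SpansFrontier {d : ℕ} (A : Matrix (Fin d) (Fin d) ℝ) (μ : Fin d → ℝ)
    (S : Set (Fin d)) : Prop :=
  ∀ p : ℝ, vS A μ S p = vS A μ Set.univ p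

section MSSAux

variable {d : ℕ} {A : Matrix (Fin d) (Fin d) ℝ} {μ : Fin d → ℝ}

private lemma dot_symm (hA : A.IsHermitian) (x y : Fin d → ℝ) :
    x ⬝ᵥ (A *ᵥ y) = y ⬝ᵥ (A *ᵥ x) := by
  have h : Aᵀ = A := by simpa using hA.eq
  rw [dotProduct_mulVec, ← mulVec_transpose, h, dotProduct_comm]

private lemma mulVec_inv_cancel (hA : A.PosDef) (v : Fin d → ℝ) :
    A *ᵥ (A⁻¹ *ᵥ v) = v := by
  rw [mulVec_mulVec, Matrix.mul_nonsing_inv _ (isUnit_iff_ne_zero.mpr hA.det_pos.ne'), one_mulVec]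

private lemma posdef_dot (hA : A.PosDef) {x : Fin d → ℝ} (hx : x ≠ 0) :
    0 < x ⬝ᵥ (A *ᵥ x) := by
  simpa using hA.dotProduct_mulVec_pos hx

private lemma possemidef_dot (hA : A.PosDef) (x : Fin d → ℝ) : 0 ≤ x ⬝ᵥ (A *ᵥ x) := by
  simpa using hA.posSemidef.dotProduct_mulVec_nonneg x

private lemma inv_diag_pos (hA : A.PosDef) (i : Fin d) : 0 < A⁻¹ i i := by
  have h := posdef_dot hA.inv (x := Pi.single i (1:ℝ)) (by
    simp [Function.ne_iff])
  simpa [dotProduct, Pi.single_apply, mulVec, Finset.sum_ite_eq] using h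

private lemma quad_lower (hA : A.PosDef) (i : Fin d) (z : Fin d → ℝ) :
    z i ^ 2 / A⁻¹ i i ≤ z ⬝ᵥ (A *ᵥ z) := by
  have hg : 0 < A⁻¹ i i := inv_diag_pos hA i
  set g := A⁻¹ i i with hgdef
  set u : Fin d → ℝ := A⁻¹ *ᵥ Pi.single i 1 with hu
  have hAu : A *ᵥ u = Pi.single i 1 := mulVec_inv_cancel hA _
  have hzu : z ⬝ᵥ (A *ᵥ u) = z i := by rw [hAu]; simp
  have huz : u ⬝ᵥ (A *ᵥ z) = z i := by rw [dot_symm hA.1, hzu]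
  have huu : u ⬝ᵥ (A *ᵥ u) = g := by
    rw [hAu]
    simp only [dotProduct_single, mul_one, hu, hgdef]
    simp [mulVec, dotProduct, Pi.single_apply]
  set t : ℝ := z i / g with htdef
  have h0 : 0 ≤ (z - t • u) ⬝ᵥ (A *ᵥ (z - t • u)) := possemidef_dot hA _
  have hexp : (z - t • u) ⬝ᵥ (A *ᵥ (z - t • u))
      = z ⬝ᵥ (A *ᵥ z) - 2 * t * z i + t ^ 2 * g := by
    rw [mulVec_sub, mulVec_smul, dotProduct_sub, sub_dotProduct, sub_dotProduct,
      dotProduct_smul, dotProduct_smul, smul_dotProduct, smul_dotProduct,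
      hzu, huz, huu]
    simp [smul_eq_mul]
    ring
  rw [hexp] at h0
  have ht : 2 * t * z i - t ^ 2 * g = z i ^ 2 / g := by
    rw [htdef]; field_simp; ring
  linarith

private lemma vS_mono (A : Matrix (Fin d) (Fin d) ℝ) (μ : Fin d → ℝ) (p : ℝ)
    {S T : Set (Fin d)} (h : S ⊆ T) : vS A μ T p ≤ vS A μ S p := by
  apply sInf_le_sInf
  rintro q ⟨x, h1, h2, h3, h4⟩
  exact ⟨x, h1, h2, fun i hi => h3 i (fun hS => hi (h hS)), h4⟩

private lemma vS_top (A : Matrix (Fin d) (Fin d) ℝ) (μ : Fin d → ℝ) (p : ℝ) (S : Set (Fin d))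
    (h : ∀ x : Fin d → ℝ, (fun _ => (1:ℝ)) ⬝ᵥ x = 1 → μ ⬝ᵥ x ≠ p) : vS A μ S p = ⊤ := by
  unfold vS
  rw [show {q : EReal | ∃ x : Fin d → ℝ,
    ((fun _ => (1 : ℝ)) ⬝ᵥ x = 1) ∧ (μ ⬝ᵥ x = p) ∧
    (∀ i, i ∉ S → x i = 0) ∧ q = ((x ⬝ᵥ (A *ᵥ x) : ℝ) : EReal)} = ∅ from ?_, sInf_empty]
  rw [Set.eq_empty_iff_forall_notMem]
  rintro q ⟨x, h1, h2, -, -⟩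
  exact h x h1 h2

private lemma vS_eq (p : ℝ) (S : Set (Fin d)) (xs : Fin d → ℝ)
    (hsupp : ∀ i, i ∉ S → xs i = 0)
    (h1 : (fun _ => (1:ℝ)) ⬝ᵥ xs = 1) (hμ : μ ⬝ᵥ xs = p)
    (hopt : ∀ x : Fin d → ℝ, (fun _ => (1:ℝ)) ⬝ᵥ x = 1 → μ ⬝ᵥ x = p →
      xs ⬝ᵥ (A *ᵥ xs) ≤ x ⬝ᵥ (A *ᵥ x)) :
    vS A μ S p = vS A μ Set.univ p := by
  refine le_antisymm ?_ (vS_mono A μ p (Set.subset_univ S))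
  calc vS A μ S p ≤ ((xs ⬝ᵥ (A *ᵥ xs) : ℝ) : EReal) := sInf_le ⟨xs, h1, hμ, hsupp, rfl⟩
    _ ≤ vS A μ Set.univ p := by
        apply le_sInf
        rintro q ⟨x, hx1, hxμ, -, rfl⟩
        exact_mod_cast hopt x hx1 hxμ

private lemma key_identity (hA : A.PosDef) {p : ℝ} {xs : Fin d → ℝ} (α β : ℝ)
    (hxs : xs = α • (A⁻¹ *ᵥ fun _ => (1:ℝ)) + β • (A⁻¹ *ᵥ μ))
    (h1 : (fun _ => (1:ℝ)) ⬝ᵥ xs = 1) (hμ : μ ⬝ᵥ xs = p)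
    (x : Fin d → ℝ) (hx1 : (fun _ => (1:ℝ)) ⬝ᵥ x = 1) (hxμ : μ ⬝ᵥ x = p) :
    x ⬝ᵥ (A *ᵥ x) = xs ⬝ᵥ (A *ᵥ xs) + (x - xs) ⬝ᵥ (A *ᵥ (x - xs)) := by
  have hAxs : A *ᵥ xs = α • (fun _ => (1:ℝ)) + β • μ := by
    rw [hxs, mulVec_add, mulVec_smul, mulVec_smul, mulVec_inv_cancel hA, mulVec_inv_cancel hA]
  have e1 : (x - xs) ⬝ᵥ (fun _ => (1:ℝ)) = 0 := by
    rw [sub_dotProduct, dotProduct_comm x, dotProduct_comm xs, hx1, h1, sub_self]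
  have e2 : (x - xs) ⬝ᵥ μ = 0 := by
    rw [sub_dotProduct, dotProduct_comm x, dotProduct_comm xs, hxμ, hμ, sub_self]
  have hcross : (x - xs) ⬝ᵥ (A *ᵥ xs) = 0 := by
    rw [hAxs, dotProduct_add, dotProduct_smul, dotProduct_smul, e1, e2]
    simp
  have hcross' : xs ⬝ᵥ (A *ᵥ (x - xs)) = 0 := by
    rw [dot_symm hA.1, hcross]
  calc x ⬝ᵥ (A *ᵥ x) = (xs + (x - xs)) ⬝ᵥ (A *ᵥ (xs + (x - xs))) := by
        rw [add_sub_cancel]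
    _ = xs ⬝ᵥ (A *ᵥ xs) + xs ⬝ᵥ (A *ᵥ (x - xs)) + ((x - xs) ⬝ᵥ (A *ᵥ xs)
          + (x - xs) ⬝ᵥ (A *ᵥ (x - xs))) := by
        rw [mulVec_add, add_dotProduct, dotProduct_add, dotProduct_add]
    _ = xs ⬝ᵥ (A *ᵥ xs) + (x - xs) ⬝ᵥ (A *ᵥ (x - xs)) := by
        rw [hcross, hcross']; ring

private lemma not_spans (hA : A.PosDef) {S : Set (Fin d)} {i : Fin d} (hiS : i ∉ S)
    (p : ℝ) (xs : Fin d → ℝ)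
    (h1 : (fun _ => (1:ℝ)) ⬝ᵥ xs = 1) (hμ : μ ⬝ᵥ xs = p)
    (hopt : ∀ x : Fin d → ℝ, (fun _ => (1:ℝ)) ⬝ᵥ x = 1 → μ ⬝ᵥ x = p →
      x ⬝ᵥ (A *ᵥ x) = xs ⬝ᵥ (A *ᵥ xs) + (x - xs) ⬝ᵥ (A *ᵥ (x - xs)))
    (hxi : xs i ≠ 0) : ¬ SpansFrontier A μ S := by
  intro hspan
  have hg : 0 < A⁻¹ i i := inv_diag_pos hA i
  set ε : ℝ := xs i ^ 2 / A⁻¹ i i with hε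
  have hεpos : 0 < ε := div_pos (by positivity) hg
  have huniv : vS A μ Set.univ p = ((xs ⬝ᵥ (A *ᵥ xs) : ℝ) : EReal) := by
    refine le_antisymm (sInf_le ⟨xs, h1, hμ, by simp, rfl⟩) ?_
    apply le_sInf
    rintro q ⟨x, hx1, hxμ, -, rfl⟩
    rw [hopt x hx1 hxμ]
    have := possemidef_dot hA (x - xs)
    exact_mod_cast by linarith
  have hS : ((xs ⬝ᵥ (A *ᵥ xs) + ε : ℝ) : EReal) ≤ vS A μ S p := by
    apply le_sInf
    rintro q ⟨x, hx1, hxμ, hsupp, rfl⟩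
    have hid := hopt x hx1 hxμ
    have hz : (x - xs) i = - xs i := by simp [hsupp i hiS]
    have hq := quad_lower hA i (x - xs)
    rw [hz] at hq
    have : ε ≤ (x - xs) ⬝ᵥ (A *ᵥ (x - xs)) := by
      simpa [hε] using hq
    exact_mod_cast by linarith
  have hp := hspan p
  rw [huniv] at hp
  rw [hp] at hS
  have : (xs ⬝ᵥ (A *ᵥ xs) + ε : ℝ) ≤ xs ⬝ᵥ (A *ᵥ xs) := by exact_mod_cast hS
  linarith

private lemma crux (hd : 2 ≤ d) (hA : A.PosDef) :
    (∀ S : Set (Fin d),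
      {i : Fin d | (A⁻¹ *ᵥ μ) i ≠ 0 ∨ (A⁻¹ *ᵥ fun _ => (1:ℝ)) i ≠ 0} ⊆ S →
      SpansFrontier A μ S) ∧
    (∀ (S : Set (Fin d)) (i : Fin d),
      ((A⁻¹ *ᵥ μ) i ≠ 0 ∨ (A⁻¹ *ᵥ fun _ => (1:ℝ)) i ≠ 0) → i ∉ S →
      ¬ SpansFrontier A μ S) := by
  have hAinv := hA.inv
  set onev : Fin d → ℝ := fun _ => (1:ℝ) with honevdef
  set u : Fin d → ℝ := A⁻¹ *ᵥ onev with hudef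
  set w : Fin d → ℝ := A⁻¹ *ᵥ μ with hwdef
  have honev : onev ≠ 0 := by
    intro h
    have := congrFun h ⟨0, by omega⟩
    simp [honevdef] at this
  have ha : 0 < onev ⬝ᵥ u := posdef_dot hAinv honev
  set a : ℝ := onev ⬝ᵥ u with hadef
  by_cases hdep : ∃ t : ℝ, μ = t • onev
  · -- dependent case : μ is a multiple of the ones vector
    obtain ⟨t, ht⟩ := hdep
    set xs : Fin d → ℝ := a⁻¹ • u with hxsdef
    have hxs : xs = a⁻¹ • u + (0:ℝ) • w := by simp [hxsdef]
    have h1 : onev ⬝ᵥ xs = 1 := by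
      rw [hxsdef, dotProduct_smul, ← hadef, smul_eq_mul, inv_mul_cancel₀ ha.ne']
    have hμt : μ ⬝ᵥ xs = t := by
      rw [ht, smul_dotProduct, h1, smul_eq_mul, mul_one]
    have hki := key_identity hA (μ := μ) a⁻¹ 0 hxs h1 hμt
    have hw : w = t • u := by
      rw [hwdef, ht, hudef, mulVec_smul]
    constructor
    · intro S hsub p
      by_cases hp : p = t
      · subst hp
        refine vS_eq p S xs ?_ h1 hμt ?_
        · intro i hiS
          have hiStar : i ∉ {i : Fin d | w i ≠ 0 ∨ u i ≠ 0} := fun h => hiS (hsub h)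
          simp only [Set.mem_setOf_eq, not_or, not_not] at hiStar
          simp [hxsdef, hiStar.2]
        · intro x hx1 hxμ
          have := hki x hx1 hxμ
          have h2 := possemidef_dot hA (x - xs)
          linarith
      · rw [vS_top A μ p S, vS_top A μ p Set.univ] <;>
        · intro x hx1
          rw [ht, smul_dotProduct, hx1, smul_eq_mul, mul_one]
          exact fun h => hp h.symm
    · intro S i hi hiS
      have hui : u i ≠ 0 := by
        rcases hi with h | h
        · rw [hw] at h
          simp only [Pi.smul_apply, smul_eq_mul] at h
          exact fun h0 => h (by rw [h0, mul_zero])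
        · exact h
      refine not_spans hA hiS t xs h1 hμt hki ?_
      simp only [hxsdef, Pi.smul_apply, smul_eq_mul]
      exact mul_ne_zero (inv_ne_zero ha.ne') hui
  · -- independent case
    push_neg at hdep
    set b : ℝ := onev ⬝ᵥ w with hbdef
    set c : ℝ := μ ⬝ᵥ w with hcdef
    have hb' : μ ⬝ᵥ u = b := by
      rw [hudef, hwdef] at *
      rw [dot_symm hAinv.1 μ onev]
    set D : ℝ := a * c - b ^ 2 with hDdef
    have hD : 0 < D := by
      set z : Fin d → ℝ := a • μ - b • onev with hzdef
      have hz0 : z ≠ 0 := by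
        intro h
        apply hdep (a⁻¹ * b)
        have h2 : a • μ = b • onev := by
          rwa [hzdef, sub_eq_zero] at h
        calc μ = a⁻¹ • (a • μ) := by rw [smul_smul, inv_mul_cancel₀ ha.ne', one_smul]
          _ = (a⁻¹ * b) • onev := by rw [h2, smul_smul]
      have hAz : A⁻¹ *ᵥ z = a • w - b • u := by
        rw [hzdef, mulVec_sub, mulVec_smul, mulVec_smul, ← hwdef, ← hudef]
      have hzval : z ⬝ᵥ (A⁻¹ *ᵥ z) = a * D := by
        rw [hAz, hzdef]
        simp only [dotProduct_sub, sub_dotProduct, dotProduct_smul, smul_dotProduct,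
          smul_eq_mul]
        rw [show μ ⬝ᵥ w = c from rfl, show onev ⬝ᵥ w = b from rfl,
          show onev ⬝ᵥ u = a from rfl, hb', hDdef]
        ring
      have hpos := posdef_dot hAinv hz0
      rw [hzval] at hpos
      nlinarith
    have hD0 : D ≠ 0 := hD.ne'
    -- the optimal portfolio for target mean p
    set xsp : ℝ → (Fin d → ℝ) :=
      fun p => ((c - b * p) / D) • u + ((a * p - b) / D) • w with hxspdef
    have hcomb : ∀ p : ℝ, xsp p = ((c - b * p) / D) • (A⁻¹ *ᵥ onev)
        + ((a * p - b) / D) • (A⁻¹ *ᵥ μ) := by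
      intro p; rw [hxspdef, hudef, hwdef]
    have h1p : ∀ p : ℝ, onev ⬝ᵥ xsp p = 1 := by
      intro p
      rw [hxspdef]
      simp only [dotProduct_add, dotProduct_smul, smul_eq_mul, ← hadef, ← hbdef]
      field_simp
      ring
    have hμp : ∀ p : ℝ, μ ⬝ᵥ xsp p = p := by
      intro p
      rw [hxspdef]
      simp only [dotProduct_add, dotProduct_smul, smul_eq_mul, hb', ← hcdef]
      field_simp
      ring
    have hki : ∀ p : ℝ, ∀ x : Fin d → ℝ, onev ⬝ᵥ x = 1 → μ ⬝ᵥ x = p →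
        x ⬝ᵥ (A *ᵥ x) = xsp p ⬝ᵥ (A *ᵥ xsp p) + (x - xsp p) ⬝ᵥ (A *ᵥ (x - xsp p)) :=
      fun p => key_identity hA _ _ (hcomb p) (h1p p) (hμp p)
    constructor
    · intro S hsub p
      refine vS_eq p S (xsp p) ?_ (h1p p) (hμp p) ?_
      · intro i hiS
        have hiStar : i ∉ {i : Fin d | w i ≠ 0 ∨ u i ≠ 0} := fun h => hiS (hsub h)
        simp only [Set.mem_setOf_eq, not_or, not_not] at hiStar
        simp [hxspdef, hiStar.1, hiStar.2]
      · intro x hx1 hxμ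
        have := hki p x hx1 hxμ
        have h2 := possemidef_dot hA (x - xsp p)
        linarith
    · intro S i hi hiS
      by_cases h0 : xsp 0 i ≠ 0
      · exact not_spans hA hiS 0 (xsp 0) (h1p 0) (hμp 0) (hki 0) h0
      · push_neg at h0
        refine not_spans hA hiS 1 (xsp 1) (h1p 1) (hμp 1) (hki 1) ?_
        intro h1i
        -- derive u i = 0 and w i = 0, contradicting hi
        have e0 : c * u i - b * w i = 0 := by
          have := h0
          simp only [hxspdef, Pi.add_apply, Pi.smul_apply, smul_eq_mul,
            mul_zero, sub_zero, zero_sub, mul_one] at this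
          field_simp at this
          linarith
        have e1 : (c - b) * u i + (a - b) * w i = 0 := by
          have := h1i
          simp only [hxspdef, Pi.add_apply, Pi.smul_apply, smul_eq_mul,
            mul_one] at this
          field_simp at this
          linarith
        have e2 : a * w i - b * u i = 0 := by nlinarith [e0, e1]
        have hu0 : u i = 0 := by
          have h3 : D * u i = 0 := by
            have h4 : D * u i = a * (c * u i - b * w i) + b * (a * w i - b * u i) := by
              rw [hDdef]; ring
            rw [h4, e0, e2]; ring
          exact (mul_eq_zero.mp h3).resolve_left hD0
        have hw0 : w i = 0 := by
          have h3 : a * w i = 0 := by rw [hu0] at e2; linarith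
          exact (mul_eq_zero.mp h3).resolve_left ha.ne'
        rcases hi with h | h
        · exact h hw0
        · exact h hu0

end MSSAux

/-- Lemma 1 of the paper: a subset `S` spans the mean-variance
frontier iff `S ⊇ S*`; consequently `S*` is nonempty, spans, no proper subset of
`S*` spans, and every spanning set contains `S*` — i.e. the minimum spanning set
exists, is unique, and equals `S*`. -/
theorem minimum_spanning_set_exists_unique
    {d : ℕ} (hd : 2 ≤ d) (A : Matrix (Fin d) (Fin d) ℝ) (hA : A.PosDef)
    (μ : Fin d → ℝ)
    (Sstar : Set (Fin d))
    (hSstar : Sstar = {i : Fin d | (A⁻¹ *ᵥ μ) i ≠ 0 ∨ (A⁻¹ *ᵥ fun _ => (1 : ℝ)) i ≠ 0}) :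
    (∀ S : Set (Fin d), SpansFrontier A μ S ↔ Sstar ⊆ S) ∧
    Sstar.Nonempty ∧
    SpansFrontier A μ Sstar ∧
    (∀ S : Set (Fin d), S ⊂ Sstar → ¬ SpansFrontier A μ S) ∧
    (∀ S : Set (Fin d), SpansFrontier A μ S → Sstar ⊆ S) := by
  subst hSstar
  obtain ⟨hsuff, hnec⟩ := crux (μ := μ) hd hA
  have hiff : ∀ S : Set (Fin d), SpansFrontier A μ S ↔
      {i : Fin d | (A⁻¹ *ᵥ μ) i ≠ 0 ∨ (A⁻¹ *ᵥ fun _ => (1 : ℝ)) i ≠ 0} ⊆ S := by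
    intro S
    constructor
    · intro hsp
      by_contra hns
      rw [Set.not_subset] at hns
      obtain ⟨i, hi, hiS⟩ := hns
      exact hnec S i hi hiS hsp
    · exact hsuff S
  have hne : ({i : Fin d | (A⁻¹ *ᵥ μ) i ≠ 0 ∨ (A⁻¹ *ᵥ fun _ => (1 : ℝ)) i ≠ 0}).Nonempty := by
    have hu0 : (A⁻¹ *ᵥ fun _ => (1:ℝ)) ≠ 0 := by
      intro h
      have h2 := mulVec_inv_cancel hA (fun _ => (1:ℝ))
      rw [h, mulVec_zero] at h2
      have := congrFun h2 ⟨0, by omega⟩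
      simp at this
    obtain ⟨j, hj⟩ := Function.ne_iff.mp hu0
    exact ⟨j, Or.inr (by simpa using hj)⟩
  refine ⟨hiff, hne, hsuff _ le_rfl, ?_, fun S hsp => (hiff S).mp hsp⟩
  intro S hS hsp
  obtain ⟨i, hi, hiS⟩ := Set.exists_of_ssubset hS
  exact hnec S i hi hiS hsp
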